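/- The real sequence k ↦ c_o(R_{2k+1}) / c_e(R_{2k+1}) (k ≥ 1) tends to infinity as k → ∞. -/

import Mathlib

open SimpleGraph Filter

/-- A subgraph is a cycle: nonempty vertex set, connected, and every vertex of the
subgraph has degree exactly 2 in the subgraph. -/
def SimpleGraph.Subgraph.IsCycleSub {V : Type*} {G : SimpleGraph V} (H : G.Subgraph) : Prop :=
  H.verts.Nonempty ∧ H.coe.Connected ∧ ∀ v ∈ H.verts, (H.neighborSet v).ncard = 2

/-- The number of odd cycles of `G`. -/
noncomputable def cOdd {V : Type*} (G : SimpleGraph V) : ℕ :=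
  {H : G.Subgraph | H.IsCycleSub ∧ Odd H.verts.ncard}.ncard

/-- The number of even cycles of `G`. -/
noncomputable def cEven {V : Type*} (G : SimpleGraph V) : ℕ :=
  {H : G.Subgraph | H.IsCycleSub ∧ Even H.verts.ncard}.ncard

/-- The number of odd cycles of `G` passing through the edge `xy`. -/
noncomputable def cOddE {V : Type*} (G : SimpleGraph V) (x y : V) : ℕ :=
  {H : G.Subgraph | H.IsCycleSub ∧ Odd H.verts.ncard ∧ H.Adj x y}.ncard

/-- The number of even cycles of `G` passing through the edge `xy`. -/
noncomputable def cEvenE {V : Type*} (G : SimpleGraph V) (x y : V) : ℕ :=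
  {H : G.Subgraph | H.IsCycleSub ∧ Even H.verts.ncard ∧ H.Adj x y}.ncard

/-- The graph `R_k`: a `k`-cycle `v_0 … v_(k-1)` where each edge `v_i v_(i+1)` lies on an
attached 4-cycle `v_i a_i b_i v_(i+1)`.  Vertex `(i, 0)` is `v_i`, `(i, 1)` is `a_i`,
`(i, 2)` is `b_i`. -/
def RGraph (k : ℕ) : SimpleGraph (ZMod k × Fin 3) :=
  SimpleGraph.fromRel (fun p q =>
    (p.2 = 0 ∧ q.2 = 0 ∧ q.1 = p.1 + 1) ∨
    (p.2 = 0 ∧ q.2 = 1 ∧ q.1 = p.1) ∨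
    (p.2 = 1 ∧ q.2 = 2 ∧ q.1 = p.1) ∨
    (p.2 = 2 ∧ q.2 = 0 ∧ q.1 = p.1 + 1))

namespace RProof

variable {k : ℕ}

def vv (j : ZMod k) : ZMod k × Fin 3 := (j, 0)
def aa (j : ZMod k) : ZMod k × Fin 3 := (j, 1)
def bb (j : ZMod k) : ZMod k × Fin 3 := (j, 2)

lemma one_ne (hk : 3 ≤ k) : (1 : ZMod k) ≠ 0 := by
  have : ((1:ℕ) : ZMod k) ≠ 0 := by
    rw [Ne, ZMod.natCast_eq_zero_iff]
    intro h; have := Nat.le_of_dvd one_pos h; omega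
  simpa using this

lemma two_ne (hk : 3 ≤ k) : (2 : ZMod k) ≠ 0 := by
  have : ((2:ℕ) : ZMod k) ≠ 0 := by
    rw [Ne, ZMod.natCast_eq_zero_iff]
    intro h; have := Nat.le_of_dvd two_pos h; omega
  simpa using this

lemma succ_ne (hk : 3 ≤ k) (j : ZMod k) : j + 1 ≠ j := by
  intro h; apply one_ne hk; linear_combination h - (j : ZMod k) * 1 - 0

lemma sub_add (j : ZMod k) : j - 1 + 1 = j := by ring

lemma succ_ne_pred (hk : 3 ≤ k) (j : ZMod k) : j + 1 ≠ j - 1 := by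
  intro h; apply two_ne hk; linear_combination h

-- adjacency lemmas
lemma adj_vv (hk : 3 ≤ k) (j : ZMod k) : (RGraph k).Adj (vv j) (vv (j+1)) := by
  rw [RGraph, fromRel_adj]
  refine ⟨fun h => succ_ne hk j ?_, Or.inl (Or.inl ⟨rfl, rfl, rfl⟩)⟩
  exact (congrArg Prod.fst h).symm

lemma adj_va (j : ZMod k) : (RGraph k).Adj (vv j) (aa j) := by
  rw [RGraph, fromRel_adj]
  exact ⟨by simp [vv, aa, Prod.ext_iff], Or.inl (Or.inr (Or.inl ⟨rfl, rfl, rfl⟩))⟩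

lemma adj_ab (j : ZMod k) : (RGraph k).Adj (aa j) (bb j) := by
  rw [RGraph, fromRel_adj]
  exact ⟨by simp [aa, bb, Prod.ext_iff], Or.inl (Or.inr (Or.inr (Or.inl ⟨rfl, rfl, rfl⟩)))⟩

lemma adj_bv (j : ZMod k) : (RGraph k).Adj (bb j) (vv (j+1)) := by
  rw [RGraph, fromRel_adj]
  exact ⟨by simp [vv, bb, Prod.ext_iff], Or.inl (Or.inr (Or.inr (Or.inr ⟨rfl, rfl, rfl⟩)))⟩

-- neighbor classification
lemma nbr_v {j : ZMod k} {q} (h : (RGraph k).Adj (vv j) q) :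
    q = vv (j+1) ∨ q = aa j ∨ q = vv (j-1) ∨ q = bb (j-1) := by
  rw [RGraph, fromRel_adj] at h
  obtain ⟨hne, h | h⟩ := h
  · rcases h with ⟨_, h2, h3⟩ | ⟨_, h2, h3⟩ | ⟨h1, _⟩ | ⟨h1, _⟩
    · exact Or.inl (Prod.ext h3 h2)
    · exact Or.inr (Or.inl (Prod.ext h3 h2))
    · exact absurd h1 (by simp [vv])
    · exact absurd h1 (by simp [vv])
  · rcases h with ⟨h1, _, h3⟩ | ⟨_, h2, _⟩ | ⟨_, h2, _⟩ | ⟨h1, _, h3⟩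
    · refine Or.inr (Or.inr (Or.inl (Prod.ext ?_ h1)))
      have h3' : j = q.1 + 1 := h3
      show q.1 = j - 1
      rw [h3']; ring
    · exact absurd h2 (by simp [vv])
    · exact absurd h2 (by simp [vv])
    · refine Or.inr (Or.inr (Or.inr (Prod.ext ?_ h1)))
      have h3' : j = q.1 + 1 := h3
      show q.1 = j - 1
      rw [h3']; ring

lemma nbr_a {j : ZMod k} {q} (h : (RGraph k).Adj (aa j) q) : q = vv j ∨ q = bb j := by
  rw [RGraph, fromRel_adj] at h
  obtain ⟨hne, h | h⟩ := h
  · rcases h with ⟨h1, _⟩ | ⟨h1, _⟩ | ⟨_, h2, h3⟩ | ⟨h1, _⟩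
    · exact absurd h1 (by simp [aa])
    · exact absurd h1 (by simp [aa])
    · exact Or.inr (Prod.ext h3 h2)
    · exact absurd h1 (by simp [aa])
  · rcases h with ⟨_, h2, _⟩ | ⟨h1, _, h3⟩ | ⟨_, h2, _⟩ | ⟨_, h2, _⟩
    · exact absurd h2 (by simp [aa])
    · exact Or.inl (Prod.ext h3.symm h1)
    · exact absurd h2 (by simp [aa])
    · exact absurd h2 (by simp [aa])

lemma nbr_b {j : ZMod k} {q} (h : (RGraph k).Adj (bb j) q) : q = aa j ∨ q = vv (j+1) := by
  rw [RGraph, fromRel_adj] at h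
  obtain ⟨hne, h | h⟩ := h
  · rcases h with ⟨h1, _⟩ | ⟨h1, _⟩ | ⟨h1, _⟩ | ⟨_, h2, h3⟩
    · exact absurd h1 (by simp [bb])
    · exact absurd h1 (by simp [bb])
    · exact absurd h1 (by simp [bb])
    · exact Or.inr (Prod.ext h3 h2)
  · rcases h with ⟨_, h2, _⟩ | ⟨_, h2, _⟩ | ⟨h1, h2, h3⟩ | ⟨_, h2, _⟩
    · exact absurd h2 (by simp [bb])
    · exact absurd h2 (by simp [bb])
    · exact Or.inl (Prod.ext h3.symm h1)
    · exact absurd h2 (by simp [bb])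

@[simp] lemma vv_eq {i j : ZMod k} : vv i = vv j ↔ i = j := by simp [vv, Prod.ext_iff]
@[simp] lemma aa_eq {i j : ZMod k} : aa i = aa j ↔ i = j := by simp [aa, Prod.ext_iff]
@[simp] lemma bb_eq {i j : ZMod k} : bb i = bb j ↔ i = j := by simp [bb, Prod.ext_iff]
@[simp] lemma vv_ne_aa {i j : ZMod k} : vv i ≠ aa j := by simp [vv, aa, Prod.ext_iff]
@[simp] lemma vv_ne_bb {i j : ZMod k} : vv i ≠ bb j := by simp [vv, bb, Prod.ext_iff]
@[simp] lemma aa_ne_vv {i j : ZMod k} : aa i ≠ vv j := by simp [vv, aa, Prod.ext_iff]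
@[simp] lemma aa_ne_bb {i j : ZMod k} : aa i ≠ bb j := by simp [aa, bb, Prod.ext_iff]
@[simp] lemma bb_ne_vv {i j : ZMod k} : bb i ≠ vv j := by simp [vv, bb, Prod.ext_iff]
@[simp] lemma bb_ne_aa {i j : ZMod k} : bb i ≠ aa j := by simp [aa, bb, Prod.ext_iff]

lemma pair_eq_of {α : Type*} {s : Set α} {x y : α} (hx : x ∈ s) (hy : y ∈ s)
    (hxy : x ≠ y) (h2 : s.ncard = 2) (hs : s.Finite) : s = {x, y} := by
  refine (Set.eq_of_subset_of_ncard_le ?_ ?_ hs).symm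
  · intro z hz
    rcases hz with rfl | hz
    · exact hx
    · rw [Set.mem_singleton_iff] at hz; subst hz; exact hy
  · rw [h2, Set.ncard_pair hxy]

variable {H : (RGraph k).Subgraph}

open SimpleGraph.Subgraph in
lemma ns_a (hH : H.IsCycleSub) {j : ZMod k} (ha : aa j ∈ H.verts) :
    H.neighborSet (aa j) = {vv j, bb j} := by
  have hdeg := hH.2.2 _ ha
  refine Set.eq_of_subset_of_ncard_le ?_ ?_ (Set.toFinite _)
  · intro q hq
    rcases nbr_a (H.adj_sub hq) with rfl | rfl
    · exact Set.mem_insert _ _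
    · exact Set.mem_insert_of_mem _ rfl
  · rw [hdeg, Set.ncard_pair (by simp)]

lemma ns_b (hH : H.IsCycleSub) {j : ZMod k} (hb : bb j ∈ H.verts) :
    H.neighborSet (bb j) = {aa j, vv (j+1)} := by
  have hdeg := hH.2.2 _ hb
  refine Set.eq_of_subset_of_ncard_le ?_ ?_ (Set.toFinite _)
  · intro q hq
    rcases nbr_b (H.adj_sub hq) with rfl | rfl
    · exact Set.mem_insert _ _
    · exact Set.mem_insert_of_mem _ rfl
  · rw [hdeg, Set.ncard_pair (by simp)]

lemma detourA (hH : H.IsCycleSub) {j : ZMod k} (ha : aa j ∈ H.verts) :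
    H.Adj (aa j) (vv j) ∧ H.Adj (aa j) (bb j) := by
  have h := ns_a hH ha
  constructor
  · have : vv j ∈ H.neighborSet (aa j) := by rw [h]; exact Set.mem_insert _ _
    exact this
  · have : bb j ∈ H.neighborSet (aa j) := by rw [h]; exact Set.mem_insert_of_mem _ rfl
    exact this

lemma detourB (hH : H.IsCycleSub) {j : ZMod k} (hb : bb j ∈ H.verts) :
    H.Adj (bb j) (aa j) ∧ H.Adj (bb j) (vv (j+1)) := by
  have h := ns_b hH hb
  constructor
  · have : aa j ∈ H.neighborSet (bb j) := by rw [h]; exact Set.mem_insert _ _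
    exact this
  · have : vv (j+1) ∈ H.neighborSet (bb j) := by rw [h]; exact Set.mem_insert_of_mem _ rfl
    exact this

lemma amem_of_bmem (hH : H.IsCycleSub) {j : ZMod k} (hb : bb j ∈ H.verts) :
    aa j ∈ H.verts := (detourB hH hb).1.snd_mem

def T4 (j : ZMod k) : Set (ZMod k × Fin 3) := {vv j, aa j, bb j, vv (j+1)}

lemma mem_T4 {j : ZMod k} {p} : p ∈ T4 j ↔ p = vv j ∨ p = aa j ∨ p = bb j ∨ p = vv (j+1) := by
  simp [T4]

def G4 (j : ZMod k) : (RGraph k).Subgraph where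
  verts := T4 j
  Adj x y := (RGraph k).Adj x y ∧ x ∈ T4 j ∧ y ∈ T4 j
  adj_sub h := h.1
  edge_vert h := h.2.1
  symm := ⟨fun x y h => ⟨h.1.symm, h.2.2, h.2.1⟩⟩

lemma ns_pair (hk : 3 ≤ k) (hH : H.IsCycleSub) {p x y : ZMod k × Fin 3} (hx : H.Adj p x)
    (hy : H.Adj p y) (hxy : x ≠ y) : H.neighborSet p = {x, y} := by
  haveI : NeZero k := ⟨by omega⟩
  exact pair_eq_of hx hy hxy (hH.2.2 _ hx.fst_mem) (Set.toFinite _)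

lemma ne_of_sub_one (hk : 3 ≤ k) (j : ZMod k) : j - 1 ≠ j := by
  intro h
  have := succ_ne hk (j-1)
  rw [sub_add] at this
  exact this h.symm

lemma eq_G4 (hk : 3 ≤ k) (hH : H.IsCycleSub) {j : ZMod k}
    (he : H.Adj (vv j) (vv (j+1))) (ha : aa j ∈ H.verts) : H = G4 j := by
  haveI : NeZero k := ⟨by omega⟩
  obtain ⟨hav, hab⟩ := detourA hH ha
  obtain ⟨hba, hbv⟩ := detourB hH hab.snd_mem
  have nsv : H.neighborSet (vv j) = {vv (j+1), aa j} :=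
    ns_pair hk hH he hav.symm (by simp)
  have nsv1 : H.neighborSet (vv (j+1)) = {vv j, bb j} :=
    ns_pair hk hH he.symm hbv.symm (by simp)
  have nsa : H.neighborSet (aa j) = {vv j, bb j} := ns_a hH ha
  have nsb : H.neighborSet (bb j) = {aa j, vv (j+1)} := ns_b hH hab.snd_mem
  have hTsub : H.verts ⊆ T4 j := by
    intro w hw
    obtain ⟨W⟩ := hH.2.1 ⟨vv j, he.fst_mem⟩ ⟨w, hw⟩
    have key : ∀ {x y : H.verts} (_ : H.coe.Walk x y), (x : ZMod k × Fin 3) ∈ T4 j →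
        (y : ZMod k × Fin 3) ∈ T4 j := by
      intro x y W hx
      induction W with
      | nil => exact hx
      | cons h p ih =>
        apply ih
        rename_i u z _
        have hz : (z : ZMod k × Fin 3) ∈ H.neighborSet (u : ZMod k × Fin 3) := h
        rcases mem_T4.1 hx with h1 | h1 | h1 | h1 <;> rw [h1] at hz
        · rw [nsv, Set.mem_insert_iff, Set.mem_singleton_iff] at hz
          rcases hz with h2 | h2 <;> rw [h2]
          · exact mem_T4.2 (Or.inr (Or.inr (Or.inr rfl)))
          · exact mem_T4.2 (Or.inr (Or.inl rfl))
        · rw [nsa, Set.mem_insert_iff, Set.mem_singleton_iff] at hz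
          rcases hz with h2 | h2 <;> rw [h2]
          · exact mem_T4.2 (Or.inl rfl)
          · exact mem_T4.2 (Or.inr (Or.inr (Or.inl rfl)))
        · rw [nsb, Set.mem_insert_iff, Set.mem_singleton_iff] at hz
          rcases hz with h2 | h2 <;> rw [h2]
          · exact mem_T4.2 (Or.inr (Or.inl rfl))
          · exact mem_T4.2 (Or.inr (Or.inr (Or.inr rfl)))
        · rw [nsv1, Set.mem_insert_iff, Set.mem_singleton_iff] at hz
          rcases hz with h2 | h2 <;> rw [h2]
          · exact mem_T4.2 (Or.inl rfl)
          · exact mem_T4.2 (Or.inr (Or.inr (Or.inl rfl)))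
    exact key W (mem_T4.2 (Or.inl rfl))
  refine SimpleGraph.Subgraph.ext ?_ ?_
  · apply Set.Subset.antisymm hTsub
    intro p hp
    rcases mem_T4.1 hp with rfl | rfl | rfl | rfl
    · exact he.fst_mem
    · exact ha
    · exact hab.snd_mem
    · exact he.snd_mem
  · funext p q
    apply propext
    constructor
    · intro hpq
      exact ⟨H.adj_sub hpq, hTsub hpq.fst_mem, hTsub hpq.snd_mem⟩
    · rintro ⟨hG, hp, hq⟩
      rcases mem_T4.1 hp with rfl | rfl | rfl | rfl
      · rcases nbr_v hG with rfl | rfl | rfl | rfl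
        · exact he
        · exact hav.symm
        · rcases mem_T4.1 hq with h | h | h | h
          · exact absurd (vv_eq.1 h) (ne_of_sub_one hk j)
          · exact absurd h (by simp)
          · exact absurd h (by simp)
          · exact absurd (vv_eq.1 h) (fun hh => succ_ne_pred hk j hh.symm)
        · rcases mem_T4.1 hq with h | h | h | h
          · exact absurd h (by simp)
          · exact absurd h (by simp)
          · exact absurd (bb_eq.1 h) (ne_of_sub_one hk j)
          · exact absurd h (by simp)
      · rcases nbr_a hG with rfl | rfl
        · exact hav
        · exact hab
      · rcases nbr_b hG with rfl | rfl
        · exact hba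
        · exact hbv
      · rcases nbr_v hG with rfl | rfl | rfl | rfl
        · rcases mem_T4.1 hq with h | h | h | h
          · exact absurd (vv_eq.1 h) (by
              intro hh
              exact two_ne hk (by linear_combination hh))
          · exact absurd h (by simp)
          · exact absurd h (by simp)
          · exact absurd (vv_eq.1 h) (succ_ne hk (j+1))
        · rcases mem_T4.1 hq with h | h | h | h
          · exact absurd h (by simp)
          · exact absurd (aa_eq.1 h) (succ_ne hk j)
          · exact absurd h (by simp)
          · exact absurd h (by simp)
        · have : j + 1 - 1 = j := by ring
          rw [this]
          exact he.symm
        · have : j + 1 - 1 = j := by ring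
          rw [this]
          exact hbv.symm

lemma eq_G4' (hk : 3 ≤ k) (hH : H.IsCycleSub) {j : ZMod k}
    (he : H.Adj (vv (j-1)) (vv j)) (ha : aa (j-1) ∈ H.verts) : H = G4 (j-1) := by
  apply eq_G4 hk hH _ ha
  rwa [sub_add]

lemma step (hk : 3 ≤ k) (hH : H.IsCycleSub) (hnot : ∀ i, H ≠ G4 i) {j : ZMod k}
    (hv : vv j ∈ H.verts) :
    ((H.Adj (vv j) (vv (j+1)) ∧ aa j ∉ H.verts) ∨
      (aa j ∈ H.verts ∧ ¬ H.Adj (vv j) (vv (j+1)))) ∧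
    ((H.Adj (vv (j-1)) (vv j) ∧ aa (j-1) ∉ H.verts) ∨
      (aa (j-1) ∈ H.verts ∧ ¬ H.Adj (vv (j-1)) (vv j))) := by
  have hdeg := hH.2.2 _ hv
  obtain ⟨x, y, hxy, hns⟩ := Set.ncard_eq_two.1 hdeg
  have hx : H.Adj (vv j) x := by
    have : x ∈ H.neighborSet (vv j) := by rw [hns]; exact Set.mem_insert _ _
    exact this
  have hy : H.Adj (vv j) y := by
    have : y ∈ H.neighborSet (vv j) := by rw [hns]; exact Set.mem_insert_of_mem _ rfl
    exact this
  -- facts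
  have hEofA : aa j ∈ H.verts → H.Adj (vv j) (aa j) := fun ha => (detourA hH ha).1.symm
  have hA'adj : aa (j-1) ∈ H.verts → H.Adj (vv j) (bb (j-1)) := by
    intro ha
    have h1 := (detourA hH ha).2
    have h2 := (detourB hH h1.snd_mem).2
    rw [sub_add] at h2
    exact h2.symm
  have hA'of : bb (j-1) ∈ H.verts → aa (j-1) ∈ H.verts := fun hb => amem_of_bmem hH hb
  have hnG4 : ¬ (H.Adj (vv j) (vv (j+1)) ∧ aa j ∈ H.verts) := by
    rintro ⟨he, ha⟩; exact hnot j (eq_G4 hk hH he ha)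
  have hnG4' : ¬ (H.Adj (vv (j-1)) (vv j) ∧ aa (j-1) ∈ H.verts) := by
    rintro ⟨he, ha⟩; exact hnot (j-1) (eq_G4' hk hH he ha)
  -- identify what membership in the neighbor set means
  have hmem : ∀ q, H.Adj (vv j) q → (q = x ∨ q = y) := by
    intro q hq
    have : q ∈ H.neighborSet (vv j) := hq
    rw [hns] at this
    rcases this with h | h
    · exact Or.inl h
    · exact Or.inr h
  have hER : H.Adj (vv j) (vv (j+1)) ∨ aa j ∈ H.verts := by
    by_contra hcon
    push_neg at hcon
    obtain ⟨hnE, hnA⟩ := hcon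
    -- x and y are both in {vv (j-1), bb (j-1)}
    have hcl : ∀ z, H.Adj (vv j) z → z = vv (j-1) ∨ z = bb (j-1) := by
      intro z hz
      rcases nbr_v (H.adj_sub hz) with rfl | rfl | rfl | rfl
      · exact absurd hz hnE
      · exact absurd hz.snd_mem hnA
      · exact Or.inl rfl
      · exact Or.inr rfl
    have hE' : H.Adj (vv (j-1)) (vv j) ∧ bb (j-1) ∈ H.verts := by
      rcases hcl x hx with rfl | rfl <;> rcases hcl y hy with rfl | rfl
      · exact absurd rfl hxy
      · exact ⟨hx.symm, hy.snd_mem⟩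
      · exact ⟨hy.symm, hx.snd_mem⟩
      · exact absurd rfl hxy
    exact hnG4' ⟨hE'.1, hA'of hE'.2⟩
  have hER' : H.Adj (vv (j-1)) (vv j) ∨ aa (j-1) ∈ H.verts := by
    by_contra hcon
    push_neg at hcon
    obtain ⟨hnE, hnA⟩ := hcon
    have hcl : ∀ z, H.Adj (vv j) z → z = vv (j+1) ∨ z = aa j := by
      intro z hz
      rcases nbr_v (H.adj_sub hz) with rfl | rfl | rfl | rfl
      · exact Or.inl rfl
      · exact Or.inr rfl
      · exact absurd hz.symm hnE
      · exact absurd (hA'of hz.snd_mem) hnA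
    have hE : H.Adj (vv j) (vv (j+1)) ∧ aa j ∈ H.verts := by
      rcases hcl x hx with rfl | rfl <;> rcases hcl y hy with rfl | rfl
      · exact absurd rfl hxy
      · exact ⟨hx, hy.snd_mem⟩
      · exact ⟨hy, hx.snd_mem⟩
      · exact absurd rfl hxy
    exact hnG4 hE
  constructor
  · rcases hER with hE | hA
    · exact Or.inl ⟨hE, fun ha => hnG4 ⟨hE, ha⟩⟩
    · exact Or.inr ⟨hA, fun hE => hnG4 ⟨hE, hA⟩⟩
  · rcases hER' with hE | hA
    · exact Or.inl ⟨hE, fun ha => hnG4' ⟨hE, ha⟩⟩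
    · exact Or.inr ⟨hA, fun hE => hnG4' ⟨hE, hA⟩⟩

lemma v_succ_mem (hk : 3 ≤ k) (hH : H.IsCycleSub) (hnot : ∀ i, H ≠ G4 i) {j : ZMod k}
    (hv : vv j ∈ H.verts) : vv (j+1) ∈ H.verts := by
  rcases (step hk hH hnot hv).1 with ⟨hE, _⟩ | ⟨hA, _⟩
  · exact hE.snd_mem
  · exact (detourB hH (detourA hH hA).2.snd_mem).2.snd_mem

lemma exists_v_mem (hH : H.IsCycleSub) : ∃ j, vv j ∈ H.verts := by
  obtain ⟨⟨j, t⟩, hp⟩ := hH.1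
  fin_cases t
  · exact ⟨j, hp⟩
  · exact ⟨j, (detourA hH hp).1.snd_mem⟩
  · exact ⟨j + 1, (detourB hH hp).2.snd_mem⟩

lemma all_v_mem (hk : 3 ≤ k) (hH : H.IsCycleSub) (hnot : ∀ i, H ≠ G4 i) (j : ZMod k) :
    vv j ∈ H.verts := by
  haveI : NeZero k := ⟨by omega⟩
  obtain ⟨i, hi⟩ := exists_v_mem hH
  have key : ∀ n : ℕ, vv (i + (n : ZMod k)) ∈ H.verts := by
    intro n
    induction n with
    | zero => simpa using hi
    | succ m ih =>
      have := v_succ_mem hk hH hnot ih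
      have harith : i + (m : ZMod k) + 1 = i + ((m + 1 : ℕ) : ZMod k) := by push_cast; ring
      rwa [harith] at this
  obtain ⟨n, hn⟩ := ZMod.natCast_zmod_surjective (j - i)
  have := key n
  rw [hn] at this
  have harith : i + (j - i) = j := by ring
  rwa [harith] at this

def ringRel (f : ZMod k → Bool) (p q : ZMod k × Fin 3) : Prop :=
  (p.2 = 0 ∧ q.2 = 0 ∧ q.1 = p.1 + 1 ∧ f p.1 = false) ∨
  (p.2 = 0 ∧ q.2 = 1 ∧ q.1 = p.1 ∧ f p.1 = true) ∨
  (p.2 = 1 ∧ q.2 = 2 ∧ q.1 = p.1 ∧ f p.1 = true) ∨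
  (p.2 = 2 ∧ q.2 = 0 ∧ q.1 = p.1 + 1 ∧ f p.1 = true)

def ringVerts (f : ZMod k → Bool) : Set (ZMod k × Fin 3) := {p | p.2 = 0 ∨ f p.1 = true}

def ringSub (hk : 3 ≤ k) (f : ZMod k → Bool) : (RGraph k).Subgraph where
  verts := ringVerts f
  Adj p q := ringRel f p q ∨ ringRel f q p
  adj_sub := by
    rintro p q (h | h)
    · rw [RGraph, fromRel_adj]
      rcases h with ⟨h1, h2, h3, h4⟩ | ⟨h1, h2, h3, h4⟩ | ⟨h1, h2, h3, h4⟩ | ⟨h1, h2, h3, h4⟩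
      · exact ⟨fun hh => succ_ne hk p.1 (by rw [← h3, hh]),
          Or.inl (Or.inl ⟨h1, h2, h3⟩)⟩
      · exact ⟨fun hh => by rw [hh, h2] at h1; exact absurd h1 (by decide),
          Or.inl (Or.inr (Or.inl ⟨h1, h2, h3⟩))⟩
      · exact ⟨fun hh => by rw [hh, h2] at h1; exact absurd h1 (by decide),
          Or.inl (Or.inr (Or.inr (Or.inl ⟨h1, h2, h3⟩)))⟩
      · exact ⟨fun hh => by rw [hh, h2] at h1; exact absurd h1 (by decide),
          Or.inl (Or.inr (Or.inr (Or.inr ⟨h1, h2, h3⟩)))⟩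
    · rw [RGraph, fromRel_adj]
      rcases h with ⟨h1, h2, h3, h4⟩ | ⟨h1, h2, h3, h4⟩ | ⟨h1, h2, h3, h4⟩ | ⟨h1, h2, h3, h4⟩
      · exact ⟨fun hh => succ_ne hk q.1 (by rw [← h3, ← hh]),
          Or.inr (Or.inl ⟨h1, h2, h3⟩)⟩
      · exact ⟨fun hh => by rw [← hh, h2] at h1; exact absurd h1 (by decide),
          Or.inr (Or.inr (Or.inl ⟨h1, h2, h3⟩))⟩
      · exact ⟨fun hh => by rw [← hh, h2] at h1; exact absurd h1 (by decide),
          Or.inr (Or.inr (Or.inr (Or.inl ⟨h1, h2, h3⟩)))⟩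
      · exact ⟨fun hh => by rw [← hh, h2] at h1; exact absurd h1 (by decide),
          Or.inr (Or.inr (Or.inr (Or.inr ⟨h1, h2, h3⟩)))⟩
  edge_vert := by
    rintro p q (h | h)
    · rcases h with ⟨h1, _⟩ | ⟨h1, _⟩ | ⟨h1, _, _, h4⟩ | ⟨h1, _, _, h4⟩
      · exact Or.inl h1
      · exact Or.inl h1
      · exact Or.inr h4
      · exact Or.inr h4
    · rcases h with ⟨_, h2, _⟩ | ⟨_, h2, h3, h4⟩ | ⟨_, h2, h3, h4⟩ | ⟨_, h2, _⟩
      · exact Or.inl h2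
      · exact Or.inr (by rw [h3]; exact h4)
      · exact Or.inr (by rw [h3]; exact h4)
      · exact Or.inl h2
  symm := ⟨fun p q h => Or.symm h⟩

lemma vv_mem_ring {hk : 3 ≤ k} {f : ZMod k → Bool} (j : ZMod k) :
    vv j ∈ (ringSub hk f).verts := Or.inl rfl

lemma aa_mem_ring {hk : 3 ≤ k} {f : ZMod k → Bool} {j : ZMod k} :
    aa j ∈ (ringSub hk f).verts ↔ f j = true := by
  constructor
  · rintro (h | h)
    · exact absurd h (by simp [aa])
    · exact h
  · exact fun h => Or.inr h

lemma bb_mem_ring {hk : 3 ≤ k} {f : ZMod k → Bool} {j : ZMod k} :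
    bb j ∈ (ringSub hk f).verts ↔ f j = true := by
  constructor
  · rintro (h | h)
    · exact absurd h (by simp [bb])
    · exact h
  · exact fun h => Or.inr h

lemma ring_adj_vv {hk : 3 ≤ k} {f : ZMod k → Bool} {j : ZMod k} (hf : f j = false) :
    (ringSub hk f).Adj (vv j) (vv (j+1)) :=
  Or.inl (Or.inl ⟨rfl, rfl, rfl, hf⟩)

lemma ring_adj_va {hk : 3 ≤ k} {f : ZMod k → Bool} {j : ZMod k} (hf : f j = true) :
    (ringSub hk f).Adj (vv j) (aa j) :=
  Or.inl (Or.inr (Or.inl ⟨rfl, rfl, rfl, hf⟩))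

lemma ring_adj_ab {hk : 3 ≤ k} {f : ZMod k → Bool} {j : ZMod k} (hf : f j = true) :
    (ringSub hk f).Adj (aa j) (bb j) :=
  Or.inl (Or.inr (Or.inr (Or.inl ⟨rfl, rfl, rfl, hf⟩)))

lemma ring_adj_bv {hk : 3 ≤ k} {f : ZMod k → Bool} {j : ZMod k} (hf : f j = true) :
    (ringSub hk f).Adj (bb j) (vv (j+1)) :=
  Or.inl (Or.inr (Or.inr (Or.inr ⟨rfl, rfl, rfl, hf⟩)))

lemma ring_ns_v {hk : 3 ≤ k} {f : ZMod k → Bool} (j : ZMod k) :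
    (ringSub hk f).neighborSet (vv j) =
      {(if f (j-1) = true then bb (j-1) else vv (j-1)), (if f j = true then aa j else vv (j+1))} := by
  ext q
  constructor
  · rintro (h | h)
    · rcases h with ⟨_, h2, h3, h4⟩ | ⟨_, h2, h3, h4⟩ | ⟨h1, _⟩ | ⟨h1, _⟩
      · have hq : q = vv (j+1) := Prod.ext h3 h2
        have h4' : f j = false := h4
        apply Set.mem_insert_of_mem
        rw [Set.mem_singleton_iff, hq, if_neg (by simp [h4'])]
      · have hq : q = aa j := Prod.ext h3 h2
        have h4' : f j = true := h4
        apply Set.mem_insert_of_mem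
        rw [Set.mem_singleton_iff, hq, if_pos h4']
      · exact absurd h1 (by simp [vv])
      · exact absurd h1 (by simp [vv])
    · rcases h with ⟨h1, _, h3, h4⟩ | ⟨_, h2, _⟩ | ⟨_, h2, _⟩ | ⟨h1, _, h3, h4⟩
      · have h3' : j = q.1 + 1 := h3
        have hj : (j - 1 : ZMod k) = q.1 := by rw [h3']; ring
        have hq : q = vv (j-1) := Prod.ext (by rw [hj]; rfl) h1
        have hfq : f (j-1) = false := by rw [hj]; exact h4
        apply Set.mem_insert_iff.2
        left
        rw [hq, if_neg (by simp [hfq])]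
      · exact absurd h2 (by simp [vv])
      · exact absurd h2 (by simp [vv])
      · have h3' : j = q.1 + 1 := h3
        have hj : (j - 1 : ZMod k) = q.1 := by rw [h3']; ring
        have hq : q = bb (j-1) := Prod.ext (by rw [hj]; rfl) h1
        have hfq : f (j-1) = true := by rw [hj]; exact h4
        apply Set.mem_insert_iff.2
        left
        rw [hq, if_pos hfq]
  · intro hq
    rcases Set.mem_insert_iff.1 hq with hq | hq
    · show (ringSub hk f).Adj (vv j) q
      by_cases hf : f (j-1) = true
      · rw [if_pos hf] at hq
        subst hq
        have := (ring_adj_bv (hk := hk) hf).symm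
        rwa [sub_add] at this
      · rw [if_neg hf] at hq
        subst hq
        have := (ring_adj_vv (hk := hk) (Bool.not_eq_true _ ▸ hf : f (j-1) = false)).symm
        rwa [sub_add] at this
    · rw [Set.mem_singleton_iff] at hq
      show (ringSub hk f).Adj (vv j) q
      by_cases hf : f j = true
      · rw [if_pos hf] at hq
        subst hq
        exact ring_adj_va hf
      · rw [if_neg hf] at hq
        subst hq
        exact ring_adj_vv (Bool.not_eq_true _ ▸ hf)

lemma ring_ns_a {hk : 3 ≤ k} {f : ZMod k → Bool} {j : ZMod k} (hf : f j = true) :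
    (ringSub hk f).neighborSet (aa j) = {vv j, bb j} := by
  ext q
  constructor
  · rintro (h | h)
    · rcases h with ⟨h1, _⟩ | ⟨h1, _⟩ | ⟨_, h2, h3, _⟩ | ⟨h1, _⟩
      · exact absurd h1 (by simp [aa])
      · exact absurd h1 (by simp [aa])
      · exact Set.mem_insert_of_mem _ (by rw [Set.mem_singleton_iff]; exact Prod.ext h3 h2)
      · exact absurd h1 (by simp [aa])
    · rcases h with ⟨_, h2, _⟩ | ⟨h1, _, h3, _⟩ | ⟨_, h2, _⟩ | ⟨_, h2, _⟩
      · exact absurd h2 (by simp [aa])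
      · have h3' : (j : ZMod k) = q.1 := h3
        exact Set.mem_insert_iff.2 (Or.inl (Prod.ext h3'.symm h1))
      · exact absurd h2 (by simp [aa])
      · exact absurd h2 (by simp [aa])
  · intro hq
    rcases Set.mem_insert_iff.1 hq with rfl | hq
    · exact ((ring_adj_va (hk := hk) hf).symm : (ringSub hk f).Adj (aa j) (vv j))
    · rw [Set.mem_singleton_iff] at hq
      subst hq
      exact ring_adj_ab (hk := hk) hf

lemma ring_ns_b {hk : 3 ≤ k} {f : ZMod k → Bool} {j : ZMod k} (hf : f j = true) :
    (ringSub hk f).neighborSet (bb j) = {aa j, vv (j+1)} := by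
  ext q
  constructor
  · rintro (h | h)
    · rcases h with ⟨h1, _⟩ | ⟨h1, _⟩ | ⟨h1, _⟩ | ⟨_, h2, h3, _⟩
      · exact absurd h1 (by simp [bb])
      · exact absurd h1 (by simp [bb])
      · exact absurd h1 (by simp [bb])
      · exact Set.mem_insert_of_mem _ (by rw [Set.mem_singleton_iff]; exact Prod.ext h3 h2)
    · rcases h with ⟨_, h2, _⟩ | ⟨_, h2, _⟩ | ⟨h1, _, h3, _⟩ | ⟨_, h2, _⟩
      · exact absurd h2 (by simp [bb])
      · exact absurd h2 (by simp [bb])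
      · have h3' : (j : ZMod k) = q.1 := h3
        exact Set.mem_insert_iff.2 (Or.inl (Prod.ext h3'.symm h1))
      · exact absurd h2 (by simp [bb])
  · intro hq
    rcases Set.mem_insert_iff.1 hq with rfl | hq
    · exact ((ring_adj_ab (hk := hk) hf).symm : (ringSub hk f).Adj (bb j) (aa j))
    · rw [Set.mem_singleton_iff] at hq
      subst hq
      exact ring_adj_bv (hk := hk) hf

lemma ring_deg (hk : 3 ≤ k) (f : ZMod k → Bool) :
    ∀ p ∈ (ringSub hk f).verts, ((ringSub hk f).neighborSet p).ncard = 2 := by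
  rintro ⟨j, t⟩ hp
  fin_cases t
  · show ((ringSub hk f).neighborSet (vv j)).ncard = 2
    rw [ring_ns_v j]
    apply Set.ncard_pair
    by_cases h1 : f (j-1) = true <;> by_cases h2 : f j = true <;>
      simp only [if_pos, if_neg, h1, h2, if_true, if_false]
    · simp
    · simp
    · simp
    · rw [if_neg (by simp), if_neg (by simp)]
      intro hcon
      exact succ_ne_pred hk j ((vv_eq.1 hcon).symm)
  · have hf : f j = true := by
      rcases hp with h | h
      · exact absurd h (by simp)
      · exact h
    show ((ringSub hk f).neighborSet (aa j)).ncard = 2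
    rw [ring_ns_a hf]
    exact Set.ncard_pair (by simp)
  · have hf : f j = true := by
      rcases hp with h | h
      · exact absurd h (by simp)
      · exact h
    show ((ringSub hk f).neighborSet (bb j)).ncard = 2
    rw [ring_ns_b hf]
    exact Set.ncard_pair (by simp)

lemma ring_conn (hk : 3 ≤ k) (f : ZMod k → Bool) : (ringSub hk f).coe.Connected := by
  haveI : NeZero k := ⟨by omega⟩
  rw [SimpleGraph.connected_iff]
  have hcoe : ∀ {x y : ZMod k × Fin 3} (hx : x ∈ (ringSub hk f).verts)
      (hy : y ∈ (ringSub hk f).verts), (ringSub hk f).Adj x y →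
      (ringSub hk f).coe.Adj ⟨x, hx⟩ ⟨y, hy⟩ := by
    intro x y hx hy h
    exact h
  have hstep : ∀ j : ZMod k, (ringSub hk f).coe.Reachable ⟨vv j, vv_mem_ring j⟩
      ⟨vv (j+1), vv_mem_ring (j+1)⟩ := by
    intro j
    by_cases hf : f j = true
    · have r1 := (hcoe (vv_mem_ring j) (aa_mem_ring.2 hf) (ring_adj_va hf)).reachable
      have r2 := (hcoe (aa_mem_ring.2 hf) (bb_mem_ring.2 hf) (ring_adj_ab (hk := hk) hf)).reachable
      have r3 := (hcoe (bb_mem_ring.2 hf) (vv_mem_ring (j+1)) (ring_adj_bv (hk := hk) hf)).reachable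
      exact (r1.trans r2).trans r3
    · exact (hcoe (vv_mem_ring j) (vv_mem_ring (j+1))
        (ring_adj_vv (Bool.not_eq_true _ ▸ hf))).reachable
  have hn : ∀ n : ℕ, (ringSub hk f).coe.Reachable ⟨vv 0, vv_mem_ring 0⟩
      ⟨vv ((n : ZMod k)), vv_mem_ring _⟩ := by
    intro n
    induction n with
    | zero =>
      have : (⟨vv 0, vv_mem_ring 0⟩ : (ringSub hk f).verts) =
          ⟨vv ((0 : ℕ) : ZMod k), vv_mem_ring _⟩ := Subtype.ext (by norm_num)
      rw [← this]
    | succ m ih =>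
      have := ih.trans (hstep (m : ZMod k))
      have harith : ((m : ZMod k) + 1) = ((m + 1 : ℕ) : ZMod k) := by push_cast; ring
      rwa [show (⟨vv ((m : ZMod k) + 1), vv_mem_ring _⟩ : (ringSub hk f).verts) =
        ⟨vv (((m + 1 : ℕ) : ZMod k)), vv_mem_ring _⟩ from Subtype.ext (by rw [harith])] at this
  have hv : ∀ j : ZMod k, (ringSub hk f).coe.Reachable ⟨vv 0, vv_mem_ring 0⟩
      ⟨vv j, vv_mem_ring j⟩ := by
    intro j
    obtain ⟨n, hn'⟩ := ZMod.natCast_zmod_surjective j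
    have := hn n
    rwa [show (⟨vv ((n : ZMod k)), vv_mem_ring _⟩ : (ringSub hk f).verts) =
      ⟨vv j, vv_mem_ring j⟩ from Subtype.ext (by rw [hn'])] at this
  constructor
  · intro p q
    have hub : ∀ p : (ringSub hk f).verts, (ringSub hk f).coe.Reachable
        ⟨vv 0, vv_mem_ring 0⟩ p := by
      rintro ⟨⟨j, t⟩, hp⟩
      fin_cases t
      · exact hv j
      · have hf : f j = true := aa_mem_ring.1 hp
        exact (hv j).trans (hcoe (vv_mem_ring j) hp (ring_adj_va hf)).reachable
      · have hf : f j = true := bb_mem_ring.1 hp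
        exact ((hv j).trans (hcoe (vv_mem_ring j) (aa_mem_ring.2 hf)
          (ring_adj_va hf)).reachable).trans
          (hcoe (aa_mem_ring.2 hf) hp (ring_adj_ab (hk := hk) hf)).reachable
    exact (hub p).symm.trans (hub q)
  · exact ⟨⟨vv 0, vv_mem_ring 0⟩⟩

lemma vv_injective : Function.Injective (vv : ZMod k → ZMod k × Fin 3) :=
  fun i j h => vv_eq.1 h
lemma aa_injective : Function.Injective (aa : ZMod k → ZMod k × Fin 3) :=
  fun i j h => aa_eq.1 h
lemma bb_injective : Function.Injective (bb : ZMod k → ZMod k × Fin 3) :=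
  fun i j h => bb_eq.1 h

lemma ring_card (hk : 3 ≤ k) (f : ZMod k → Bool) :
    (ringSub hk f).verts.ncard = k + 2 * {j | f j = true}.ncard := by
  haveI : NeZero k := ⟨by omega⟩
  set S : Set (ZMod k) := {j | f j = true} with hS
  have hdecomp : (ringSub hk f).verts = (vv '' Set.univ) ∪ ((aa '' S) ∪ (bb '' S)) := by
    ext ⟨j, t⟩
    constructor
    · intro hp
      fin_cases t
      · exact Or.inl ⟨j, trivial, rfl⟩
      · have hf : f j = true := aa_mem_ring.1 hp
        exact Or.inr (Or.inl ⟨j, hf, rfl⟩)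
      · have hf : f j = true := bb_mem_ring.1 hp
        exact Or.inr (Or.inr ⟨j, hf, rfl⟩)
    · rintro (⟨i, _, hi2⟩ | ⟨i, hi, hi2⟩ | ⟨i, hi, hi2⟩) <;> rw [← hi2]
      · exact vv_mem_ring i
      · exact aa_mem_ring.2 hi
      · exact bb_mem_ring.2 hi
  rw [hdecomp]
  rw [Set.ncard_union_eq ?d1 (Set.toFinite _) (Set.toFinite _),
      Set.ncard_union_eq ?d2 (Set.toFinite _) (Set.toFinite _)]
  case d1 =>
    rw [Set.disjoint_left]
    rintro p ⟨i, _, rfl⟩ (⟨i', _, h⟩ | ⟨i', _, h⟩)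
    · exact aa_ne_vv h
    · exact bb_ne_vv h
  case d2 =>
    rw [Set.disjoint_left]
    rintro p ⟨i, _, rfl⟩ ⟨i', _, h⟩
    exact bb_ne_aa h
  rw [Set.ncard_image_of_injective _ vv_injective,
      Set.ncard_image_of_injective _ aa_injective,
      Set.ncard_image_of_injective _ bb_injective,
      Set.ncard_univ, Nat.card_eq_fintype_card, ZMod.card]
  ring

lemma ring_odd (hk : 3 ≤ k) (hkodd : Odd k) (f : ZMod k → Bool) :
    Odd ((ringSub hk f).verts.ncard) := by
  rw [ring_card hk f]
  exact hkodd.add_even (even_two_mul _)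

lemma ring_cycle (hk : 3 ≤ k) (f : ZMod k → Bool) : (ringSub hk f).IsCycleSub :=
  ⟨⟨vv 0, vv_mem_ring 0⟩, ring_conn hk f, ring_deg hk f⟩

lemma ring_inj (hk : 3 ≤ k) : Function.Injective (ringSub hk) := by
  intro f g h
  funext j
  have hiff : f j = true ↔ g j = true := by
    rw [← aa_mem_ring (hk := hk) (f := f), h, aa_mem_ring]
  cases hf : f j <;> cases hg : g j
  · rfl
  · rw [hf, hg] at hiff; simp at hiff
  · rw [hf, hg] at hiff; simp at hiff
  · rfl

lemma classify (hk : 3 ≤ k) (hH : H.IsCycleSub) :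
    (∃ j, H = G4 j) ∨ (∃ f, H = ringSub hk f) := by
  by_cases hex : ∃ j, H = G4 j
  · exact Or.inl hex
  push_neg at hex
  right
  classical
  refine ⟨fun j => decide (aa j ∈ H.verts), ?_⟩
  set f := fun j => decide (aa j ∈ H.verts) with hfdef
  have hf : ∀ j, f j = true ↔ aa j ∈ H.verts := fun j => by simp [hfdef]
  have hall := all_v_mem hk hH hex
  have key : ∀ p q : ZMod k × Fin 3, H.Adj p q →
      ((p.2 = 0 ∧ q.2 = 0 ∧ q.1 = p.1 + 1) ∨ (p.2 = 0 ∧ q.2 = 1 ∧ q.1 = p.1) ∨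
       (p.2 = 1 ∧ q.2 = 2 ∧ q.1 = p.1) ∨ (p.2 = 2 ∧ q.2 = 0 ∧ q.1 = p.1 + 1)) →
      ringRel f p q := by
    rintro p q hpq (⟨h1, h2, h3⟩ | ⟨h1, h2, h3⟩ | ⟨h1, h2, h3⟩ | ⟨h1, h2, h3⟩)
    · have hp : p = vv p.1 := Prod.ext rfl h1
      have hq : q = vv (p.1 + 1) := Prod.ext h3 h2
      rw [hp, hq] at hpq
      rcases (step hk hH hex hpq.fst_mem).1 with ⟨_, hna⟩ | ⟨_, hnadj⟩
      · exact Or.inl ⟨h1, h2, h3, by simp [hfdef, hna]⟩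
      · exact absurd hpq hnadj
    · have hq : q = aa p.1 := Prod.ext h3 h2
      have hft : f p.1 = true := (hf _).2 (hq ▸ hpq.snd_mem)
      exact Or.inr (Or.inl ⟨h1, h2, h3, hft⟩)
    · have hp : p = aa p.1 := Prod.ext rfl h1
      have hft : f p.1 = true := (hf _).2 (hp ▸ hpq.fst_mem)
      exact Or.inr (Or.inr (Or.inl ⟨h1, h2, h3, hft⟩))
    · have hp : p = bb p.1 := Prod.ext rfl h1
      have hft : f p.1 = true := (hf _).2 (amem_of_bmem hH (hp ▸ hpq.fst_mem))
      exact Or.inr (Or.inr (Or.inr ⟨h1, h2, h3, hft⟩))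
  have key2 : ∀ p q : ZMod k × Fin 3, ringRel f p q → H.Adj p q := by
    rintro p q (⟨h1, h2, h3, h4⟩ | ⟨h1, h2, h3, h4⟩ | ⟨h1, h2, h3, h4⟩ | ⟨h1, h2, h3, h4⟩)
    · have hp : p = vv p.1 := Prod.ext rfl h1
      have hq : q = vv (p.1 + 1) := Prod.ext h3 h2
      rw [hp, hq]
      rcases (step hk hH hex (hall p.1)).1 with ⟨hadj, _⟩ | ⟨hA, _⟩
      · exact hadj
      · exact absurd ((hf p.1).2 hA) (by rw [h4]; simp)
    · have ha : aa p.1 ∈ H.verts := (hf _).1 h4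
      have hp : p = vv p.1 := Prod.ext rfl h1
      have hq : q = aa p.1 := Prod.ext h3 h2
      rw [hp, hq]
      exact (detourA hH ha).1.symm
    · have ha : aa p.1 ∈ H.verts := (hf _).1 h4
      have hp : p = aa p.1 := Prod.ext rfl h1
      have hq : q = bb p.1 := Prod.ext h3 h2
      rw [hp, hq]
      exact (detourA hH ha).2
    · have ha : aa p.1 ∈ H.verts := (hf _).1 h4
      have hp : p = bb p.1 := Prod.ext rfl h1
      have hq : q = vv (p.1 + 1) := Prod.ext h3 h2
      rw [hp, hq]
      exact (detourB hH (detourA hH ha).2.snd_mem).2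
  refine SimpleGraph.Subgraph.ext ?_ ?_
  · ext ⟨j, t⟩
    fin_cases t
    · exact iff_of_true (hall j) (vv_mem_ring j)
    · exact ⟨fun h => aa_mem_ring.2 ((hf j).2 h), fun h => (hf j).1 (aa_mem_ring.1 h)⟩
    · constructor
      · intro h
        exact bb_mem_ring.2 ((hf j).2 (amem_of_bmem hH h))
      · intro h
        exact (detourA hH ((hf j).1 (bb_mem_ring.1 h))).2.snd_mem
  · funext p q
    apply propext
    constructor
    · intro hpq
      have hG := H.adj_sub hpq
      rw [RGraph, fromRel_adj] at hG
      rcases hG.2 with h | h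
      · exact Or.inl (key p q hpq h)
      · exact Or.inr (key q p hpq.symm h)
    · rintro (h | h)
      · exact key2 p q h
      · exact (key2 q p h).symm

lemma even_eq_G4 (hk : 3 ≤ k) (hkodd : Odd k) (hH : H.IsCycleSub)
    (he : Even H.verts.ncard) : ∃ j, H = G4 j := by
  rcases classify hk hH with h | ⟨f, rfl⟩
  · exact h
  · exact absurd he (Nat.not_even_iff_odd.2 (ring_odd hk hkodd f))

lemma G4_ns_v (hk : 3 ≤ k) (j : ZMod k) :
    (G4 j).neighborSet (vv j) = {aa j, vv (j+1)} := by
  ext q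
  constructor
  · rintro ⟨hG, _, hq⟩
    rcases nbr_v hG with rfl | rfl | rfl | rfl
    · exact Set.mem_insert_of_mem _ rfl
    · exact Set.mem_insert _ _
    · rcases mem_T4.1 hq with h | h | h | h
      · exact absurd (vv_eq.1 h) (ne_of_sub_one hk j)
      · exact absurd h (by simp)
      · exact absurd h (by simp)
      · exact absurd (vv_eq.1 h) (fun hh => succ_ne_pred hk j hh.symm)
    · rcases mem_T4.1 hq with h | h | h | h
      · exact absurd h (by simp)
      · exact absurd h (by simp)
      · exact absurd (bb_eq.1 h) (ne_of_sub_one hk j)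
      · exact absurd h (by simp)
  · intro hq
    rcases Set.mem_insert_iff.1 hq with rfl | hq
    · exact ⟨(adj_va j).symm.symm, mem_T4.2 (Or.inl rfl), mem_T4.2 (Or.inr (Or.inl rfl))⟩
    · rw [Set.mem_singleton_iff] at hq
      subst hq
      exact ⟨adj_vv hk j, mem_T4.2 (Or.inl rfl), mem_T4.2 (Or.inr (Or.inr (Or.inr rfl)))⟩

lemma G4_ns_v1 (hk : 3 ≤ k) (j : ZMod k) :
    (G4 j).neighborSet (vv (j+1)) = {bb j, vv j} := by
  ext q
  constructor
  · rintro ⟨hG, _, hq⟩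
    rcases nbr_v hG with rfl | rfl | rfl | rfl
    · rcases mem_T4.1 hq with h | h | h | h
      · exact absurd (vv_eq.1 h) (by
          intro hh
          exact two_ne hk (by linear_combination hh))
      · exact absurd h (by simp)
      · exact absurd h (by simp)
      · exact absurd (vv_eq.1 h) (succ_ne hk (j+1))
    · rcases mem_T4.1 hq with h | h | h | h
      · exact absurd h (by simp)
      · exact absurd (aa_eq.1 h) (succ_ne hk j)
      · exact absurd h (by simp)
      · exact absurd h (by simp)
    · have harith : j + 1 - 1 = j := by ring
      rw [harith]
      exact Set.mem_insert_of_mem _ rfl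
    · have harith : j + 1 - 1 = j := by ring
      rw [harith]
      exact Set.mem_insert _ _
  · intro hq
    rcases Set.mem_insert_iff.1 hq with rfl | hq
    · exact ⟨(adj_bv j).symm, mem_T4.2 (Or.inr (Or.inr (Or.inr rfl))),
        mem_T4.2 (Or.inr (Or.inr (Or.inl rfl)))⟩
    · rw [Set.mem_singleton_iff] at hq
      subst hq
      exact ⟨(adj_vv hk j).symm, mem_T4.2 (Or.inr (Or.inr (Or.inr rfl))), mem_T4.2 (Or.inl rfl)⟩

lemma G4_ns_a (hk : 3 ≤ k) (j : ZMod k) :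
    (G4 j).neighborSet (aa j) = {vv j, bb j} := by
  ext q
  constructor
  · rintro ⟨hG, _, _⟩
    rcases nbr_a hG with rfl | rfl
    · exact Set.mem_insert _ _
    · exact Set.mem_insert_of_mem _ rfl
  · intro hq
    rcases Set.mem_insert_iff.1 hq with rfl | hq
    · exact ⟨(adj_va j).symm, mem_T4.2 (Or.inr (Or.inl rfl)), mem_T4.2 (Or.inl rfl)⟩
    · rw [Set.mem_singleton_iff] at hq
      subst hq
      exact ⟨adj_ab j, mem_T4.2 (Or.inr (Or.inl rfl)), mem_T4.2 (Or.inr (Or.inr (Or.inl rfl)))⟩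

lemma G4_ns_b (hk : 3 ≤ k) (j : ZMod k) :
    (G4 j).neighborSet (bb j) = {aa j, vv (j+1)} := by
  ext q
  constructor
  · rintro ⟨hG, _, _⟩
    rcases nbr_b hG with rfl | rfl
    · exact Set.mem_insert _ _
    · exact Set.mem_insert_of_mem _ rfl
  · intro hq
    rcases Set.mem_insert_iff.1 hq with rfl | hq
    · exact ⟨(adj_ab j).symm, mem_T4.2 (Or.inr (Or.inr (Or.inl rfl))),
        mem_T4.2 (Or.inr (Or.inl rfl))⟩
    · rw [Set.mem_singleton_iff] at hq
      subst hq
      exact ⟨adj_bv j, mem_T4.2 (Or.inr (Or.inr (Or.inl rfl))),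
        mem_T4.2 (Or.inr (Or.inr (Or.inr rfl)))⟩

lemma G4_cycle (hk : 3 ≤ k) (j : ZMod k) : (G4 j).IsCycleSub := by
  refine ⟨⟨vv j, mem_T4.2 (Or.inl rfl)⟩, ?_, ?_⟩
  · rw [SimpleGraph.connected_iff]
    have hub : ∀ p : (G4 j).verts, (G4 j).coe.Reachable ⟨vv j, mem_T4.2 (Or.inl rfl)⟩ p := by
      rintro ⟨p, hp⟩
      have m1 : vv j ∈ T4 j := mem_T4.2 (Or.inl rfl)
      have m2 : aa j ∈ T4 j := mem_T4.2 (Or.inr (Or.inl rfl))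
      have m3 : bb j ∈ T4 j := mem_T4.2 (Or.inr (Or.inr (Or.inl rfl)))
      have m4 : vv (j+1) ∈ T4 j := mem_T4.2 (Or.inr (Or.inr (Or.inr rfl)))
      have e1 : (G4 j).coe.Adj ⟨vv j, m1⟩ ⟨aa j, m2⟩ := ⟨adj_va j, m1, m2⟩
      have e2 : (G4 j).coe.Adj ⟨aa j, m2⟩ ⟨bb j, m3⟩ := ⟨adj_ab j, m2, m3⟩
      have e3 : (G4 j).coe.Adj ⟨vv j, m1⟩ ⟨vv (j+1), m4⟩ := ⟨adj_vv hk j, m1, m4⟩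
      rcases mem_T4.1 hp with rfl | rfl | rfl | rfl
      · rfl
      · exact e1.reachable
      · exact (e1.reachable).trans e2.reachable
      · exact e3.reachable
    exact ⟨fun p q => (hub p).symm.trans (hub q), ⟨⟨vv j, mem_T4.2 (Or.inl rfl)⟩⟩⟩
  · intro p hp
    rcases mem_T4.1 hp with rfl | rfl | rfl | rfl
    · rw [G4_ns_v hk j]
      exact Set.ncard_pair (by simp)
    · rw [G4_ns_a hk j]
      exact Set.ncard_pair (by simp)
    · rw [G4_ns_b hk j]
      exact Set.ncard_pair (by simp)
    · rw [G4_ns_v1 hk j]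
      exact Set.ncard_pair (by simp)

lemma G4_card (hk : 3 ≤ k) (j : ZMod k) : (G4 j).verts.ncard = 4 := by
  have hne : j ≠ j + 1 := Ne.symm (succ_ne hk j)
  show (T4 j).ncard = 4
  rw [T4]
  rw [Set.ncard_insert_of_notMem (by simp [hne]) (Set.toFinite _),
      Set.ncard_insert_of_notMem (by simp) (Set.toFinite _),
      Set.ncard_insert_of_notMem (by simp) (Set.toFinite _),
      Set.ncard_singleton]

lemma subgraph_finite {V : Type*} [Finite V] {G : SimpleGraph V} : Finite G.Subgraph :=
  Finite.of_injective (fun H => (H.verts, H.Adj))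
    (fun a b hab => SimpleGraph.Subgraph.ext (congrArg Prod.fst hab) (congrArg Prod.snd hab))

lemma cEven_le (hk : 3 ≤ k) (hkodd : Odd k) : cEven (RGraph k) ≤ k := by
  haveI : NeZero k := ⟨by omega⟩
  haveI : Finite ((RGraph k).Subgraph) := subgraph_finite
  have hsub : {H : (RGraph k).Subgraph | H.IsCycleSub ∧ Even H.verts.ncard} ⊆
      G4 '' Set.univ := by
    rintro H ⟨h1, h2⟩
    obtain ⟨j, rfl⟩ := even_eq_G4 hk hkodd h1 h2
    exact ⟨j, trivial, rfl⟩
  calc cEven (RGraph k) ≤ (G4 '' (Set.univ : Set (ZMod k))).ncard :=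
        Set.ncard_le_ncard hsub (Set.toFinite _)
    _ ≤ (Set.univ : Set (ZMod k)).ncard := Set.ncard_image_le (Set.toFinite _)
    _ = k := by rw [Set.ncard_univ, Nat.card_eq_fintype_card, ZMod.card]

lemma cEven_pos (hk : 3 ≤ k) : 1 ≤ cEven (RGraph k) := by
  haveI : NeZero k := ⟨by omega⟩
  haveI : Finite ((RGraph k).Subgraph) := subgraph_finite
  have hmem : G4 (0 : ZMod k) ∈
      {H : (RGraph k).Subgraph | H.IsCycleSub ∧ Even H.verts.ncard} :=
    ⟨G4_cycle hk 0, by rw [G4_card hk 0]; exact ⟨2, rfl⟩⟩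
  rw [cEven]
  exact (Set.ncard_pos (Set.toFinite _)).2 ⟨_, hmem⟩

lemma cOdd_ge (hk : 3 ≤ k) (hkodd : Odd k) : 2^k ≤ cOdd (RGraph k) := by
  haveI : NeZero k := ⟨by omega⟩
  haveI : Finite ((RGraph k).Subgraph) := subgraph_finite
  have hsub : (ringSub hk) '' Set.univ ⊆
      {H : (RGraph k).Subgraph | H.IsCycleSub ∧ Odd H.verts.ncard} := by
    rintro _ ⟨f, _, rfl⟩
    exact ⟨ring_cycle hk f, ring_odd hk hkodd f⟩
  calc (2:ℕ)^k = Fintype.card (ZMod k → Bool) := by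
        rw [Fintype.card_fun, Fintype.card_bool, ZMod.card]
    _ = (Set.univ : Set (ZMod k → Bool)).ncard := by
        rw [Set.ncard_univ, Nat.card_eq_fintype_card]
    _ = ((ringSub hk) '' Set.univ).ncard :=
        (Set.ncard_image_of_injective _ (ring_inj hk)).symm
    _ ≤ cOdd (RGraph k) := Set.ncard_le_ncard hsub (Set.toFinite _)

lemma sq_le_pow (m : ℕ) (hm : 2 ≤ m) : (2*m+1)^2 ≤ 2^(2*m+1) := by
  induction m with
  | zero => omega
  | succ n ih =>
    rcases Nat.lt_or_ge n 2 with hn | hn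
    · interval_cases n
      · omega
      · norm_num
    · have h1 := ih hn
      have h2 : 2^(2*(n+1)+1) = 4 * 2^(2*n+1) := by ring
      rw [h2]
      nlinarith [h1, hn]

end RProof

theorem tendsto_ratio_RGraph :
    Tendsto (fun k : ℕ => (cOdd (RGraph (2 * k + 1)) : ℝ) / (cEven (RGraph (2 * k + 1)) : ℝ))
      atTop atTop := by
  have htend : Tendsto (fun m : ℕ => ((2 * m + 1 : ℕ) : ℝ)) atTop atTop :=
    tendsto_natCast_atTop_atTop.comp
      (tendsto_atTop_mono (fun n => by simp only [id_eq]; omega) tendsto_id)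
  apply tendsto_atTop_mono' atTop ?_ htend
  rw [Filter.EventuallyLE, eventually_atTop]
  refine ⟨2, fun m hm => ?_⟩
  set k := 2 * m + 1 with hkdef
  have hk : 3 ≤ k := by omega
  have hkodd : Odd k := ⟨m, by omega⟩
  have h1 := RProof.cOdd_ge hk hkodd
  have h2 := RProof.cEven_le hk hkodd
  have h3 := RProof.cEven_pos hk
  have h4 := RProof.sq_le_pow m hm
  have hc0 : (0:ℝ) < (cEven (RGraph k) : ℝ) := by exact_mod_cast h3
  rw [le_div_iff₀ hc0]
  have hstep1 : ((k:ℕ):ℝ) * (cEven (RGraph k) : ℝ) ≤ (k:ℝ) * (k:ℝ) := by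
    apply mul_le_mul_of_nonneg_left _ (by positivity)
    exact_mod_cast h2
  refine hstep1.trans ?_
  have hchain : (k:ℕ) * (k:ℕ) ≤ cOdd (RGraph k) := by
    calc (k:ℕ) * k = k^2 := by ring
      _ ≤ 2^k := h4
      _ ≤ cOdd (RGraph k) := h1
  exact_mod_cast hchain
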